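/- For d = 2, Π the Z basis and Ξ the X basis, the witness lower bound of the coherence, log₂ 2 − H(Δ_X(ρ)) = 1 − H(p₊), with p₊ = ⟨+|ρ|+⟩, is always less than or equal to the exact relative entropy of coherence C(ρ) = H(p_z) − H((1+|r|)/2) (Bloch vector r, p_z = ⟨0|ρ|0⟩), and the two are equal whenever the Bloch vector of ρ lies in the x–z plane with z-component 0, i.e. r = (x,0,0). -/

import Mathlib

open scoped BigOperators
open Real

/-- binary Shannon entropy (base 2) -/
noncomputable def H2 (p : ℝ) : ℝ := -(p * Real.logb 2 p) - (1 - p) * Real.logb 2 (1 - p)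

/-- von Neumann entropy (base 2) of a matrix, via its eigenvalues (0 if not Hermitian) -/
noncomputable def vnEntropy {n : Type*} [Fintype n] [DecidableEq n] (A : Matrix n n ℂ) : ℝ :=
  if h : A.IsHermitian then -∑ i, h.eigenvalues i * Real.logb 2 (h.eigenvalues i) else 0

/-- entropy of the dephased (in the standard/Z basis) state, i.e. Shannon entropy
of the diagonal of `A` -/
noncomputable def diagEntropy {n : Type*} [Fintype n] (A : Matrix n n ℂ) : ℝ :=
  -∑ i, (A i i).re * Real.logb 2 (A i i).re

/-- relative entropy of coherence with respect to the standard (Z) basis: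
`C(ρ) = H(Δ_Z(ρ)) - H(ρ)` -/
noncomputable def relEntCoh {n : Type*} [Fintype n] [DecidableEq n] (A : Matrix n n ℂ) : ℝ :=
  diagEntropy A - vnEntropy A

noncomputable def σx : Matrix (Fin 2) (Fin 2) ℂ := !![0, 1; 1, 0]
noncomputable def σy : Matrix (Fin 2) (Fin 2) ℂ := !![0, -Complex.I; Complex.I, 0]
noncomputable def σz : Matrix (Fin 2) (Fin 2) ℂ := !![1, 0; 0, -1]


lemma H2_symm (p : ℝ) : H2 (1 - p) = H2 p := by
  unfold H2; ring_nf

lemma H2_half : H2 (1/2 : ℝ) = 1 := by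
  unfold H2
  rw [show (1:ℝ) - 1/2 = 1/2 by norm_num, show (1:ℝ)/2 = 2⁻¹ by norm_num,
    Real.logb_inv, Real.logb_self_eq_one (by norm_num)]
  ring

lemma rho_eq (x y z : ℝ) :
    (2:ℂ)⁻¹ • (1 + (x : ℂ) • σx + (y : ℂ) • σy + (z : ℂ) • σz)
      = !![(1 + (z:ℂ))/2, ((x:ℂ) - (y:ℂ)*Complex.I)/2;
           ((x:ℂ) + (y:ℂ)*Complex.I)/2, (1 - (z:ℂ))/2] := by
  ext i j
  fin_cases i <;> fin_cases j <;>
    simp [σx, σy, σz, Matrix.one_apply] <;> ring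

lemma rho_herm (x y z : ℝ) :
    (!![(1 + (z:ℂ))/2, ((x:ℂ) - (y:ℂ)*Complex.I)/2;
        ((x:ℂ) + (y:ℂ)*Complex.I)/2, (1 - (z:ℂ))/2]).IsHermitian := by
  unfold Matrix.IsHermitian
  ext i j
  fin_cases i <;> fin_cases j <;>
    simp [Matrix.conjTranspose_apply, Complex.ext_iff]

lemma trace_eq_sum_eigenvalues {n : Type*} [Fintype n] [DecidableEq n]
    {A : Matrix n n ℂ} (hA : A.IsHermitian) :
    A.trace = ∑ i, (hA.eigenvalues i : ℂ) := by
  exact hA.trace_eq_sum_eigenvalues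

lemma eig_facts (x y z : ℝ) :
    let A := !![(1 + (z:ℂ))/2, ((x:ℂ) - (y:ℂ)*Complex.I)/2;
        ((x:ℂ) + (y:ℂ)*Complex.I)/2, (1 - (z:ℂ))/2]
    ∀ (hA : A.IsHermitian),
      hA.eigenvalues 0 + hA.eigenvalues 1 = 1 ∧
      hA.eigenvalues 0 * hA.eigenvalues 1 = (1 - (x^2+y^2+z^2))/4 := by
  intro A hA
  have htr : A.trace = 1 := by
    simp [A, Matrix.trace_fin_two]; ring
  have hdet : A.det = (((1 - (x^2+y^2+z^2))/4 : ℝ) : ℂ) := by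
    rw [Matrix.det_fin_two]
    show (1 + (z:ℂ))/2 * ((1 - (z:ℂ))/2) - ((x:ℂ) - (y:ℂ)*Complex.I)/2 * (((x:ℂ) + (y:ℂ)*Complex.I)/2) = _
    have hI : Complex.I^2 = -1 := Complex.I_sq
    push_cast
    ring_nf
    rw [hI]
    ring
  have h1 := trace_eq_sum_eigenvalues hA
  rw [htr, Fin.sum_univ_two] at h1
  have h2 := hA.det_eq_prod_eigenvalues
  rw [hdet, Fin.prod_univ_two] at h2
  constructor
  · exact_mod_cast h1.symm
  · have h2' : ((hA.eigenvalues 0 * hA.eigenvalues 1 : ℝ) : ℂ)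
        = (((1 - (x^2+y^2+z^2))/4 : ℝ) : ℂ) := by push_cast; exact h2.symm.trans (by push_cast; ring)
    exact Complex.ofReal_injective h2'

lemma conj1 (x y z : ℝ) :
    relEntCoh ((2:ℂ)⁻¹ • (1 + (x : ℂ) • σx + (y : ℂ) • σy + (z : ℂ) • σz))
      = H2 ((1 + z) / 2) - H2 ((1 + Real.sqrt (x^2 + y^2 + z^2)) / 2) := by
  rw [rho_eq]
  set A := !![(1 + (z:ℂ))/2, ((x:ℂ) - (y:ℂ)*Complex.I)/2;
      ((x:ℂ) + (y:ℂ)*Complex.I)/2, (1 - (z:ℂ))/2] with hAdef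
  have hA : A.IsHermitian := rho_herm x y z
  have hdiag : diagEntropy A = H2 ((1 + z) / 2) := by
    unfold diagEntropy
    rw [Fin.sum_univ_two]
    have e0 : A 0 0 = (((1+z)/2 : ℝ) : ℂ) := by rw [hAdef]; push_cast; norm_num
    have e1 : A 1 1 = (((1-z)/2 : ℝ) : ℂ) := by rw [hAdef]; push_cast; norm_num
    rw [e0, e1, Complex.ofReal_re, Complex.ofReal_re]
    unfold H2
    rw [show (1:ℝ)-(1+z)/2 = (1-z)/2 by ring]
    ring
  have hvn : vnEntropy A = H2 ((1 + Real.sqrt (x^2 + y^2 + z^2)) / 2) := by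
    unfold vnEntropy
    rw [dif_pos hA, Fin.sum_univ_two]
    obtain ⟨hsum, hprod⟩ := eig_facts x y z hA
    set a := hA.eigenvalues 0
    set b := hA.eigenvalues 1
    have hb : b = 1 - a := by linarith
    rw [hb] at hprod
    have hsq : (2*a - 1)^2 = x^2+y^2+z^2 := by linear_combination (-4:ℝ) * hprod
    have habs : Real.sqrt (x^2+y^2+z^2) = |2*a - 1| := by
      rw [← hsq, Real.sqrt_sq_eq_abs]
    have hH : -(a * Real.logb 2 a + b * Real.logb 2 b) = H2 a := by
      rw [hb]; unfold H2; ring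
    rw [hH]
    rcases abs_cases (2*a - 1) with ⟨he, _⟩ | ⟨he, _⟩
    · have ha : a = (1 + Real.sqrt (x^2+y^2+z^2))/2 := by rw [habs, he]; ring
      rw [ha]
    · have ha : a = 1 - (1 + Real.sqrt (x^2+y^2+z^2))/2 := by rw [habs, he]; ring
      rw [ha, H2_symm]
  unfold relEntCoh
  rw [hdiag, hvn]


noncomputable def L (t : ℝ) : ℝ := Real.log (1 + t) - Real.log (1 - t)

lemma L_hasDeriv {t b : ℝ} (ht : t ∈ Set.Ioo (0:ℝ) b) (hb : b < 1) :
    HasDerivAt L (2 / (1 - t^2)) t := by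
  obtain ⟨ht0, htb⟩ := ht
  have h1 : (1:ℝ) + t ≠ 0 := by nlinarith
  have h2 : (1:ℝ) - t ≠ 0 := by nlinarith
  have d1 : HasDerivAt (fun t : ℝ => Real.log (1 + t)) (1/(1+t)) t := by
    have := (Real.hasDerivAt_log h1).comp t ((hasDerivAt_id t).const_add 1)
    simpa [Function.comp_def] using this
  have d2 : HasDerivAt (fun t : ℝ => Real.log (1 - t)) (-(1/(1-t))) t := by
    have := (Real.hasDerivAt_log h2).comp t ((hasDerivAt_id t).neg.const_add 1)
    simpa [div_eq_mul_inv, Function.comp_def] using this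
  have h1' : (0:ℝ) < 1 + t := by nlinarith
  have h2' : (0:ℝ) < 1 - t := by nlinarith
  have h3 : (1:ℝ) - t^2 ≠ 0 := by nlinarith
  have key : (1+t)⁻¹ + (1-t)⁻¹ = 2/(1-t^2) := by
    field_simp
    ring
  have := d1.sub d2
  simp only [sub_neg_eq_add] at this
  rw [show (1/(1+t) + 1/(1-t)) = 2/(1-t^2) by rw [one_div, one_div, key]] at this
  exact this

lemma L_convex {b : ℝ} (hb0 : 0 < b) (hb : b < 1) : ConvexOn ℝ (Set.Icc 0 b) L := by
  have hcont : ContinuousOn L (Set.Icc 0 b) := by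
    apply ContinuousOn.sub
    · apply ContinuousOn.log (by fun_prop)
      intro t ht; nlinarith [ht.1, ht.2]
    · apply ContinuousOn.log (by fun_prop)
      intro t ht; nlinarith [ht.1, ht.2]
  rw [show Set.Icc (0:ℝ) b = Set.Icc 0 b from rfl]
  apply MonotoneOn.convexOn_of_deriv (convex_Icc 0 b) hcont
  · rw [interior_Icc]
    intro t ht
    exact (L_hasDeriv ht hb).differentiableAt.differentiableWithinAt
  · rw [interior_Icc]
    intro u hu v hv huv
    rw [(L_hasDeriv hu hb).deriv, (L_hasDeriv hv hb).deriv]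
    have h1 : (0:ℝ) < 1 - v^2 := by nlinarith [hv.1, hv.2]
    have h2 : 1 - v^2 ≤ 1 - u^2 := by nlinarith [hu.1]
    have := div_le_div_of_nonneg_left (by norm_num : (0:ℝ) ≤ 2) h1 h2
    simpa using this

lemma L_zero : L 0 = 0 := by simp [L]

lemma L_slope_mono {s t : ℝ} (hs : 0 < s) (hst : s ≤ t) (ht : t < 1) :
    L s / s ≤ L t / t := by
  have hconv := L_convex (lt_of_lt_of_le hs hst) ht
  have h0 : (0:ℝ) ∈ Set.Icc (0:ℝ) t := by constructor <;> norm_num [le_trans hs.le hst]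
  have hsm : s ∈ Set.Icc (0:ℝ) t := ⟨hs.le, hst⟩
  have htm : t ∈ Set.Icc (0:ℝ) t := ⟨le_trans hs.le hst, le_refl t⟩
  have h := hconv.secant_mono h0 hsm htm hs.ne' (lt_of_lt_of_le hs hst).ne' hst
  simpa [L_zero] using h

noncomputable def M (u : ℝ) : ℝ := Real.log 2 - Real.binEntropy ((1 + Real.sqrt u)/2)

lemma M_zero : M 0 = 0 := by
  simp [M, Real.binEntropy_two_inv]

lemma M_hasDeriv {u : ℝ} (hu : u ∈ Set.Ioo (0:ℝ) 1) :
    HasDerivAt M (L (Real.sqrt u) / (4 * Real.sqrt u)) u := by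
  obtain ⟨hu0, hu1⟩ := hu
  have hs0 : 0 < Real.sqrt u := Real.sqrt_pos.mpr hu0
  have hs1 : Real.sqrt u < 1 := by
    rw [show (1:ℝ) = Real.sqrt 1 by simp]
    exact Real.sqrt_lt_sqrt hu0.le hu1
  set t := Real.sqrt u with htdef
  have hp0 : (1 + t)/2 ≠ 0 := by positivity
  have hp1 : (1 + t)/2 ≠ 1 := by intro hc; nlinarith [hc]
  have dsqrt : HasDerivAt Real.sqrt (1/(2*t)) u := Real.hasDerivAt_sqrt hu0.ne'
  have dp : HasDerivAt (fun u => (1 + Real.sqrt u)/2) (1/(4*t)) u := by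
    have := (dsqrt.const_add 1).div_const 2
    refine this.congr_deriv ?_
    ring
  have dB := (Real.hasDerivAt_binEntropy hp0 hp1).comp u dp
  have dM : HasDerivAt M (-((Real.log (1 - (1+t)/2) - Real.log ((1+t)/2)) * (1/(4*t)))) u :=
    (dB.const_sub (Real.log 2))
  convert dM using 1
  have e1 : (1:ℝ) - (1+t)/2 = (1-t)/2 := by ring
  rw [e1, Real.log_div (by nlinarith) (by norm_num), Real.log_div (by nlinarith) (by norm_num)]
  simp only [L]
  field_simp
  ring

lemma M_cont : ContinuousOn M (Set.Icc 0 1) := by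
  apply Continuous.continuousOn
  exact continuous_const.sub (Real.binEntropy_continuous.comp (by fun_prop))

lemma M_deriv_eq {u : ℝ} (hu : u ∈ Set.Ioo (0:ℝ) 1) :
    deriv M u = L (Real.sqrt u) / (4 * Real.sqrt u) := (M_hasDeriv hu).deriv

lemma sqrt_mem {u : ℝ} (hu : u ∈ Set.Ioo (0:ℝ) 1) :
    0 < Real.sqrt u ∧ Real.sqrt u < 1 := by
  refine ⟨Real.sqrt_pos.mpr hu.1, ?_⟩
  rw [show (1:ℝ) = Real.sqrt 1 by simp]
  exact Real.sqrt_lt_sqrt hu.1.le hu.2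

lemma M_convex : ConvexOn ℝ (Set.Icc 0 1) M := by
  apply MonotoneOn.convexOn_of_deriv (convex_Icc 0 1) M_cont
  · rw [interior_Icc]
    intro u hu
    exact (M_hasDeriv hu).differentiableAt.differentiableWithinAt
  · rw [interior_Icc]
    intro u hu v hv huv
    rw [M_deriv_eq hu, M_deriv_eq hv]
    obtain ⟨hs0, hs1⟩ := sqrt_mem hu
    obtain ⟨ht0, ht1⟩ := sqrt_mem hv
    have hst : Real.sqrt u ≤ Real.sqrt v := Real.sqrt_le_sqrt huv
    have := L_slope_mono hs0 hst ht1
    rw [div_le_div_iff₀ hs0 ht0] at this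
    rw [div_le_div_iff₀ (by positivity) (by positivity)]
    nlinarith [this]

lemma M_mono : MonotoneOn M (Set.Icc 0 1) := by
  apply monotoneOn_of_deriv_nonneg (convex_Icc 0 1) M_cont
  · rw [interior_Icc]
    intro u hu
    exact (M_hasDeriv hu).differentiableAt.differentiableWithinAt
  · rw [interior_Icc]
    intro u hu
    rw [M_deriv_eq hu]
    obtain ⟨hs0, hs1⟩ := sqrt_mem hu
    have hL : 0 ≤ L (Real.sqrt u) := by
      unfold L
      have := Real.log_le_log (by nlinarith) (by nlinarith : 1 - Real.sqrt u ≤ 1 + Real.sqrt u)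
      linarith
    positivity

lemma M_superadd {u v : ℝ} (hu : 0 ≤ u) (hv : 0 ≤ v) (huv : u + v ≤ 1) :
    M u + M v ≤ M (u + v) := by
  rcases eq_or_lt_of_le hu with rfl | hu'
  · simp [M_zero]
  rcases eq_or_lt_of_le hv with rfl | hv'
  · simp [M_zero]
  have hmem : u + v ∈ Set.Icc (0:ℝ) 1 := ⟨by positivity, huv⟩
  have h0 : (0:ℝ) ∈ Set.Icc (0:ℝ) 1 := by norm_num
  have hs : 0 < u + v := by positivity
  have hab : u/(u+v) + v/(u+v) = 1 := by
    rw [← add_div, div_self hs.ne']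
  have hba : v/(u+v) + u/(u+v) = 1 := by
    rw [← add_div, show v + u = u + v by ring, div_self hs.ne']
  have c1 := M_convex.2 hmem h0 (by positivity : (0:ℝ) ≤ u/(u+v))
    (by positivity : (0:ℝ) ≤ v/(u+v)) hab
  have c2 := M_convex.2 hmem h0 (by positivity : (0:ℝ) ≤ v/(u+v))
    (by positivity : (0:ℝ) ≤ u/(u+v)) hba
  simp only [smul_eq_mul, mul_zero, add_zero, M_zero] at c1 c2
  rw [show u/(u+v) * (u+v) = u by field_simp] at c1
  rw [show v/(u+v) * (u+v) = v by field_simp] at c2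
  have hMsum : u/(u+v) * M (u+v) + v/(u+v) * M (u+v) = M (u+v) := by
    rw [← add_mul, hab, one_mul]
  linarith [c1, c2]

lemma H2_eq (p : ℝ) : H2 p = Real.binEntropy p / Real.log 2 := by
  unfold H2 Real.binEntropy Real.logb
  rw [Real.log_inv, Real.log_inv]
  ring

lemma M_sq (x : ℝ) : M (x^2) = Real.log 2 - Real.binEntropy ((1 + x)/2) := by
  unfold M
  rw [Real.sqrt_sq_eq_abs]
  rcases abs_cases x with ⟨he, _⟩ | ⟨he, _⟩
  · rw [he]
  · rw [he, show (1 + -x)/2 = 1 - (1+x)/2 by ring, Real.binEntropy_one_sub]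

lemma main_ineq (x y z : ℝ) (h : x^2 + y^2 + z^2 ≤ 1) :
    1 - H2 ((1 + x) / 2)
      ≤ H2 ((1 + z) / 2) - H2 ((1 + Real.sqrt (x^2 + y^2 + z^2)) / 2) := by
  have hlog : (0:ℝ) < Real.log 2 := Real.log_pos one_lt_two
  have hMs : M (x^2+y^2+z^2) = Real.log 2
      - Real.binEntropy ((1 + Real.sqrt (x^2+y^2+z^2))/2) := rfl
  have step1 : M (x^2) + M (z^2) ≤ M (x^2 + z^2) :=
    M_superadd (by positivity) (by positivity) (by nlinarith [sq_nonneg y])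
  have step2 : M (x^2 + z^2) ≤ M (x^2+y^2+z^2) :=
    M_mono ⟨by positivity, by nlinarith [sq_nonneg y]⟩ ⟨by positivity, h⟩
      (by nlinarith [sq_nonneg y])
  have key : M (x^2) + M (z^2) ≤ M (x^2+y^2+z^2) := le_trans step1 step2
  rw [M_sq, M_sq, hMs] at key
  rw [H2_eq, H2_eq, H2_eq]
  have k2 := (div_le_div_iff_of_pos_right hlog).mpr key
  rw [add_div, sub_div, sub_div, sub_div, div_self hlog.ne'] at k2
  linarith [k2]

/-- for a qubit with Bloch vector `(x,y,z)` (so `p_z = (1+z)/2`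
and `p₊ = ⟨+|ρ|+⟩ = (1+x)/2`), the X-basis witness lower bound
`log₂2 - H(Δ_X(ρ)) = 1 - H(p₊)` never exceeds the exact relative entropy of
coherence `C(ρ) = H(p_z) - H((1+|r|)/2)`, and the two are equal whenever the
Bloch vector lies on the x axis (`y = z = 0`). -/
theorem stmt17 (x y z : ℝ) (h : x^2 + y^2 + z^2 ≤ 1) :
    relEntCoh ((2:ℂ)⁻¹ • (1 + (x : ℂ) • σx + (y : ℂ) • σy + (z : ℂ) • σz))
        = H2 ((1 + z) / 2) - H2 ((1 + Real.sqrt (x^2 + y^2 + z^2)) / 2) ∧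
    1 - H2 ((1 + x) / 2)
        ≤ relEntCoh ((2:ℂ)⁻¹ • (1 + (x : ℂ) • σx + (y : ℂ) • σy + (z : ℂ) • σz)) ∧
    (y = 0 → z = 0 →
      1 - H2 ((1 + x) / 2)
        = relEntCoh ((2:ℂ)⁻¹ • (1 + (x : ℂ) • σx + (y : ℂ) • σy + (z : ℂ) • σz))) := by
  refine ⟨conj1 x y z, (conj1 x y z) ▸ main_ineq x y z h, ?_⟩
  intro hy hz
  subst hy; subst hz
  rw [conj1]
  rw [show x^2+(0:ℝ)^2+(0:ℝ)^2 = x^2 by ring,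
    show (1+(0:ℝ))/2 = 1/2 by norm_num, H2_half, Real.sqrt_sq_eq_abs]
  rcases abs_cases x with ⟨he, _⟩ | ⟨he, _⟩
  · rw [he]
  · rw [he, show (1 + -x)/2 = 1 - (1+x)/2 by ring, H2_symm]
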